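/- Let C : ℝ → ℂ be a finite trigonometric sum C(θ) = ∑_{k=1}^{L} β_k · e^{i·γ_k·θ}, where β_k ∈ ℂ and γ_1, …, γ_L are pairwise distinct real numbers. Then there exist a finite set S ⊂ ℝ of shifts and coefficients c_Δ ∈ ℂ for Δ ∈ S (both independent of θ) such that the derivative satisfies C'(θ) = ∑_{Δ ∈ S} c_Δ · C(θ + Δ) for all θ ∈ ℝ. -/

import Mathlib

open Complex

/-- **Existence of a parameter shift rule** (sufficiency): a finite trigonometric sum
`C(θ) = ∑_{k=1}^{L} β_k e^{iγ_k θ}` with pairwise distinct real frequencies admits a parameter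
shift rule: its derivative is a fixed finite linear combination of shifted evaluations. -/
theorem trig_sum_admits_parameter_shift_rule
    (L : ℕ) (β : Fin L → ℂ) (γ : Fin L → ℝ)
    (hγ : ∀ p q : Fin L, p ≠ q → γ p ≠ γ q)
    (C : ℝ → ℂ)
    (hC : ∀ θ : ℝ, C θ = ∑ k, β k * Complex.exp (Complex.I * (γ k : ℂ) * (θ : ℂ))) :
    ∃ (S : Finset ℝ) (c : ℝ → ℂ), ∀ θ : ℝ,
      deriv C θ = ∑ Δ ∈ S, c Δ * C (θ + Δ) := by
  classical
  set M : ℝ := 1 + ∑ k, |γ k| with hM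
  have hMpos : 0 < M := by
    have : 0 ≤ ∑ k, |γ k| := Finset.sum_nonneg (fun k _ => abs_nonneg _)
    linarith
  set t : ℝ := Real.pi / M with ht
  have htpos : 0 < t := div_pos Real.pi_pos hMpos
  -- the points exp(I γ k t) are pairwise distinct
  set x : Fin L → ℂ := fun k => Complex.exp (I * (γ k : ℂ) * (t : ℂ)) with hx
  have hxinj : Function.Injective x := by
    intro p q h
    by_contra hpq
    have hgne := hγ p q hpq
    have h1 : Complex.exp (I * (γ p : ℂ) * (t : ℂ) - I * (γ q : ℂ) * (t : ℂ)) = 1 := by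
      rw [Complex.exp_sub, show Complex.exp (I * (γ p : ℂ) * (t : ℂ)) = Complex.exp (I * (γ q : ℂ) * (t : ℂ)) from h, div_self (Complex.exp_ne_zero _)]
    rw [Complex.exp_eq_one_iff] at h1
    obtain ⟨n, hn⟩ := h1
    have h2 : ((γ p * t - γ q * t : ℝ) : ℂ) = ((n * (2 * Real.pi) : ℝ) : ℂ) := by
      have hI : (I : ℂ) ≠ 0 := Complex.I_ne_zero
      apply mul_left_cancel₀ hI
      push_cast
      linear_combination hn
    have h3 : γ p * t - γ q * t = n * (2 * Real.pi) := by exact_mod_cast h2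
    -- bound
    have habs : |γ p - γ q| ≤ ∑ k, |γ k| := by
      have := Finset.add_sum_erase Finset.univ (fun k => |γ k|) (Finset.mem_univ p)
      have hq : |γ q| ≤ ∑ k ∈ Finset.univ.erase p, |γ k| :=
        Finset.single_le_sum (f := fun k => |γ k|) (fun k _ => abs_nonneg _)
          (Finset.mem_erase.mpr ⟨Ne.symm hpq, Finset.mem_univ q⟩)
      calc |γ p - γ q| ≤ |γ p| + |γ q| := abs_sub _ _
        _ ≤ |γ p| + ∑ k ∈ Finset.univ.erase p, |γ k| := by linarith
        _ = ∑ k, |γ k| := this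
    have hlt : |γ p * t - γ q * t| < 2 * Real.pi := by
      rw [← sub_mul, abs_mul, abs_of_pos htpos]
      have : |γ p - γ q| * t < M * t := by
        apply mul_lt_mul_of_pos_right _ htpos
        calc |γ p - γ q| ≤ ∑ k, |γ k| := habs
          _ < M := by rw [hM]; linarith
      have hMt : M * t = Real.pi := by
        rw [ht]; field_simp
      calc |γ p - γ q| * t < M * t := this
        _ = Real.pi := hMt
        _ < 2 * Real.pi := by linarith [Real.pi_pos]
    rw [h3] at hlt
    have hn0 : n = 0 := by
      rw [abs_mul, abs_of_pos (by positivity : (0:ℝ) < 2 * Real.pi)] at hlt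
      have h5 : |(n : ℝ)| < 1 := by
        by_contra hcon
        push_neg at hcon
        nlinarith [Real.pi_pos]
      have h6 : |n| < 1 := by exact_mod_cast h5
      have := abs_lt.mp h6
      omega
    rw [hn0] at h3
    push_cast at h3
    have h7 : γ p * t = γ q * t := by linarith
    exact hgne (mul_right_cancel₀ (ne_of_gt htpos) h7)
  -- Vandermonde matrix is invertible
  set A : Matrix (Fin L) (Fin L) ℂ := Matrix.vandermonde x with hA
  have hdet : A.det ≠ 0 := by
    rw [hA, Matrix.det_vandermonde]
    rw [Finset.prod_ne_zero_iff]
    intro i _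
    rw [Finset.prod_ne_zero_iff]
    intro j hj
    have hij : i < j := Finset.mem_Ioi.mp hj
    exact sub_ne_zero.mpr (fun h => (ne_of_lt hij) (hxinj h.symm))
  set v : Fin L → ℂ := fun k => I * (γ k : ℂ) with hv
  set sol : Fin L → ℂ := A⁻¹.mulVec v with hsol
  have hAsol : A.mulVec sol = v := by
    rw [hsol, Matrix.mulVec_mulVec, Matrix.mul_nonsing_inv A (isUnit_iff_ne_zero.mpr hdet),
      Matrix.one_mulVec]
  -- derivative of C
  have hC' : ∀ θ : ℝ, HasDerivAt C
      (∑ k, β k * (I * (γ k : ℂ)) * Complex.exp (I * (γ k : ℂ) * (θ : ℂ))) θ := by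
    intro θ
    have hCeq : C = fun θ : ℝ => ∑ k, β k * Complex.exp (I * (γ k : ℂ) * (θ : ℂ)) := funext hC
    rw [hCeq]
    apply HasDerivAt.fun_sum
    intro k _
    have h2 : HasDerivAt (fun z : ℂ => I * (γ k : ℂ) * z) (I * (γ k : ℂ)) (θ : ℂ) := by
      simpa using (hasDerivAt_id (θ : ℂ)).const_mul (I * (γ k : ℂ))
    have h3 := (Complex.hasDerivAt_exp (I * (γ k : ℂ) * (θ : ℂ))).comp (θ : ℂ) h2
    have h4 := (h3.const_mul (β k)).comp_ofReal
    exact h4.congr_deriv (by ring)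
  -- the shifts
  have hjinj : Function.Injective (fun j : Fin L => (j : ℝ) * t) := by
    intro a b hab
    simp only at hab
    have : (a : ℝ) = b := mul_right_cancel₀ (ne_of_gt htpos) hab
    have : (a : ℕ) = b := by exact_mod_cast this
    exact Fin.ext this
  refine ⟨Finset.univ.image (fun j : Fin L => (j : ℝ) * t),
    fun Δ => ∑ j : Fin L, if (j : ℝ) * t = Δ then sol j else 0, ?_⟩
  intro θ
  rw [(hC' θ).deriv]
  rw [Finset.sum_image (fun a _ b _ h => hjinj h)]
  have hcval : ∀ j₀ : Fin L,
      (∑ j : Fin L, if (j : ℝ) * t = (j₀ : ℝ) * t then sol j else 0) = sol j₀ := by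
    intro j₀
    rw [Finset.sum_eq_single j₀]
    · simp
    · intro j _ hj
      rw [if_neg (fun h => hj (hjinj h))]
    · simp
  calc ∑ k, β k * (I * (γ k : ℂ)) * Complex.exp (I * (γ k : ℂ) * (θ : ℂ))
      = ∑ k, ∑ j, sol j * (β k * Complex.exp (I * (γ k : ℂ) * ((θ + (j : ℝ) * t : ℝ) : ℂ))) := by
        apply Finset.sum_congr rfl
        intro k _
        have hexp : ∀ j : Fin L, Complex.exp (I * (γ k : ℂ) * ((θ + (j : ℝ) * t : ℝ) : ℂ))
            = Complex.exp (I * (γ k : ℂ) * (θ : ℂ)) * x k ^ (j : ℕ) := by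
          intro j
          rw [hx]
          rw [← Complex.exp_nat_mul, ← Complex.exp_add]
          congr 1
          push_cast
          ring
        calc β k * (I * (γ k : ℂ)) * Complex.exp (I * (γ k : ℂ) * (θ : ℂ))
            = β k * Complex.exp (I * (γ k : ℂ) * (θ : ℂ)) * (A.mulVec sol k) := by
              rw [hAsol, hv]; ring
          _ = β k * Complex.exp (I * (γ k : ℂ) * (θ : ℂ)) * ∑ j : Fin L, x k ^ (j : ℕ) * sol j := by
              simp [Matrix.mulVec, dotProduct, hA, Matrix.vandermonde]
          _ = ∑ j, sol j * (β k * Complex.exp (I * (γ k : ℂ) * ((θ + (j : ℝ) * t : ℝ) : ℂ))) := by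
              rw [Finset.mul_sum]
              apply Finset.sum_congr rfl
              intro j _
              rw [hexp j]
              ring
    _ = ∑ j, ∑ k, sol j * (β k * Complex.exp (I * (γ k : ℂ) * ((θ + (j : ℝ) * t : ℝ) : ℂ))) :=
        Finset.sum_comm
    _ = ∑ j : Fin L, (∑ j' : Fin L, if (j' : ℝ) * t = (j : ℝ) * t then sol j' else 0) * C (θ + (j : ℝ) * t) := by
        apply Finset.sum_congr rfl
        intro j _
        rw [hcval j, hC, Finset.mul_sum]
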